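/- (Gessel–Xin constant-term extraction lemma.) Work in the field of iterated Laurent series K⟨⟨x_n, x_{n−1},…,x_0⟩⟩ = K((x_n))((x_{n−1}))⋯((x_0)) over K = ℚ(q), in which every rational function in x_0,…,x_n is identified with its unique iterated Laurent series expansion. Let m be a positive integer, let k ∈ {0,…,n}, let p(x_k) be a Laurent polynomial in x_k of degree at most m−1 with coefficients in the field of iterated Laurent series in the remaining variables x_0,…,x_{k−1},x_{k+1},…,x_n, let 0 ≤ i_1 ≤ ⋯ ≤ i_m ≤ n with all i_r ≠ k, and let c_1,…,c_m ∈ K∖{0} satisfy c_r ≠ c_s whenever i_r = i_s. Set f = p(x_k) / ∏_{r=1}^{m}(1 − x_k/(c_r x_{i_r})). Then CT_{x_k} f = ∑_{r : i_r > k} (f · (1 − x_k/(c_r x_{i_r})))|_{x_k = c_r x_{i_r}}. -/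

import Mathlib

noncomputable section

/-- The field `K = ℚ(q)`. -/
abbrev KK : Type := RatFunc ℚ

/-- Iterated Laurent series fields, bundled with their field structure:
`ILSpair 0 = K` and `ILSpair (m+1) = (ILSpair m)((x))`, the new Laurent-series
variable being the *outermost* one. -/
def ILSpair : ℕ → (α : Type) × Field α
  | 0 => ⟨KK, inferInstance⟩
  | (m+1) =>
    letI := (ILSpair m).2
    ⟨LaurentSeries (ILSpair m).1, inferInstance⟩

/-- The field of iterated Laurent series in `m` variables:
`ILS (n+1) = K((x_n))((x_{n-1}))⋯((x_0))`, layer `0` being the outermost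
variable `x_0`. -/
def ILS (m : ℕ) : Type := (ILSpair m).1

instance ILS.instField (m : ℕ) : Field (ILS m) := (ILSpair m).2

/-- `ILS (m+1)` is (definitionally) a field of Laurent series over `ILS m`. -/
def toLS {m : ℕ} (f : ILS (m+1)) : LaurentSeries (ILS m) := f

/-- The inverse identification. -/
def ofLS {m : ℕ} (f : LaurentSeries (ILS m)) : ILS (m+1) := f

lemma toLS_zero (m : ℕ) : toLS (0 : ILS (m+1)) = (0 : LaurentSeries (ILS m)) := rfl
lemma ofLS_zero (m : ℕ) : ofLS (0 : LaurentSeries (ILS m)) = (0 : ILS (m+1)) := rfl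

/-- The variable `x_k` as an element of `ILS m` (`k` counted from the outermost
layer, so that in `ILS (n+1)` the variables are `x_0, x_1, …, x_n`). -/
def ILSvar : (m : ℕ) → ℕ → ILS m
  | 0, _ => 1
  | (_+1), 0 => ofLS (HahnSeries.single (1 : ℤ) 1)
  | (m+1), (k+1) => ofLS (HahnSeries.C (ILSvar m k))

/-- The embedding of the scalar field `K = ℚ(q)` into `ILS m`. -/
def ILSc : (m : ℕ) → (KK → ILS m)
  | 0 => id
  | (m+1) => fun c => ofLS (HahnSeries.C (ILSc m c))

/-- The constant-term operator `CT_{x_k}` on `ILS m`: it extracts the coefficient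
of `x_k^0` (an iterated Laurent series free of `x_k`), re-embedded into `ILS m`.
An element `f` is free of `x_k` exactly when `CTx m k f = f`. -/
def CTx : (m : ℕ) → ℕ → ZeroHom (ILS m) (ILS m)
  | 0, _ => ZeroHom.id _
  | (m+1), 0 =>
    { toFun := fun f => ofLS (HahnSeries.C ((toLS f).coeff 0))
      map_zero' := by
        have h : HahnSeries.C ((toLS (0 : ILS (m+1))).coeff 0) =
            (0 : LaurentSeries (ILS m)) := by
          rw [toLS_zero]; simp
        exact (congrArg ofLS h).trans (ofLS_zero m) }
  | (m+1), (k+1) =>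
    { toFun := fun f => ofLS ((toLS f).map (CTx m k))
      map_zero' := by
        have h : (toLS (0 : ILS (m+1))).map (CTx m k) = (0 : LaurentSeries (ILS m)) := by
          rw [toLS_zero]
          exact HahnSeries.map_zero (CTx m k)
        exact (congrArg ofLS h).trans (ofLS_zero m) }

open HahnSeries Pointwise

section Bridge
variable {m : ℕ}
lemma ofLS_add (a b : LaurentSeries (ILS m)) : ofLS (a + b) = ofLS a + ofLS b := rfl
lemma ofLS_mul (a b : LaurentSeries (ILS m)) : ofLS (a * b) = ofLS a * ofLS b := rfl
lemma ofLS_one : ofLS (1 : LaurentSeries (ILS m)) = 1 := rfl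
lemma ofLS_neg (a : LaurentSeries (ILS m)) : ofLS (-a) = - ofLS a := rfl
lemma ofLS_sub (a b : LaurentSeries (ILS m)) : ofLS (a - b) = ofLS a - ofLS b := rfl
lemma toLS_ofLS (a : LaurentSeries (ILS m)) : toLS (ofLS a) = a := rfl
lemma ofLS_toLS (a : ILS (m+1)) : ofLS (toLS a) = a := rfl
lemma toLS_add (a b : ILS (m+1)) : toLS (a + b) = toLS a + toLS b := rfl
lemma toLS_mul (a b : ILS (m+1)) : toLS (a * b) = toLS a * toLS b := rfl
lemma toLS_one : toLS (1 : ILS (m+1)) = 1 := rfl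
lemma ofLS_injective : Function.Injective (ofLS (m := m)) := fun _ _ h => h

/-- `ofLS` as a ring isomorphism. -/
def LSequiv (m : ℕ) : LaurentSeries (ILS m) ≃+* ILS (m+1) where
  toFun := ofLS
  invFun := toLS
  left_inv _ := rfl
  right_inv _ := rfl
  map_add' := ofLS_add
  map_mul' := ofLS_mul

lemma ofLS_inv (a : LaurentSeries (ILS m)) : ofLS a⁻¹ = (ofLS a)⁻¹ :=
  map_inv₀ (LSequiv m) a
end Bridge

/-- The support (in the variable `x_k`) of `f : ILS m` is contained in `S`. -/
def SuppIn : (m k : ℕ) → Set ℤ → ILS m → Prop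
  | 0, _, _, _ => True
  | (_+1), 0, S, f => ∀ d : ℤ, d ∉ S → (toLS f).coeff d = 0
  | (m+1), (k+1), S, f => ∀ d : ℤ, SuppIn m k S ((toLS f).coeff d)

lemma suppIn_mono : ∀ (m k : ℕ) {S T : Set ℤ}, S ⊆ T → ∀ {f : ILS m},
    SuppIn m k S f → SuppIn m k T f
  | 0, _, _, _, _, _, _ => trivial
  | (_+1), 0, _, _, hST, _, hf => fun d hd => hf d (fun h => hd (hST h))
  | (m+1), (k+1), _, _, hST, _, hf => fun d => suppIn_mono m k hST (hf d)

lemma suppIn_zero : ∀ (m k : ℕ) (S : Set ℤ), SuppIn m k S (0 : ILS m)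
  | 0, _, _ => trivial
  | (_+1), 0, _ => fun _ _ => rfl
  | (m+1), (k+1), S => fun _ => suppIn_zero m k S

lemma suppIn_add : ∀ (m k : ℕ) {S : Set ℤ} {f g : ILS m},
    SuppIn m k S f → SuppIn m k S g → SuppIn m k S (f + g)
  | 0, _, _, _, _, _, _ => trivial
  | (_+1), 0, _, _, _, hf, hg => fun d hd => by
      rw [toLS_add, HahnSeries.coeff_add, hf d hd, hg d hd, add_zero]
  | (m+1), (k+1), _, _, _, hf, hg => fun d => by
      rw [toLS_add, HahnSeries.coeff_add]
      exact suppIn_add m k (hf d) (hg d)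

lemma suppIn_neg : ∀ (m k : ℕ) {S : Set ℤ} {f : ILS m},
    SuppIn m k S f → SuppIn m k S (-f)
  | 0, _, _, _, _ => trivial
  | (_+1), 0, _, _, hf => fun d hd => by
      show (-(toLS _)).coeff d = 0
      rw [HahnSeries.coeff_neg, hf d hd, neg_zero]
  | (m+1), (k+1), _, _, hf => fun d => by
      show SuppIn m k _ ((-(toLS _)).coeff d)
      rw [HahnSeries.coeff_neg]
      exact suppIn_neg m k (hf d)

lemma suppIn_sum (m k : ℕ) {S : Set ℤ} {ι : Type*} (t : Finset ι) (F : ι → ILS m)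
    (h : ∀ i ∈ t, SuppIn m k S (F i)) : SuppIn m k S (∑ i ∈ t, F i) := by
  classical
  induction t using Finset.induction_on with
  | empty => simpa using suppIn_zero m k S
  | insert _ _ hnot ih =>
    rw [Finset.sum_insert hnot]
    exact suppIn_add m k (h _ (Finset.mem_insert_self _ _))
      (ih fun i hi => h i (Finset.mem_insert_of_mem hi))

lemma suppIn_mul : ∀ (m k : ℕ) {S T : Set ℤ} {f g : ILS m},
    SuppIn m k S f → SuppIn m k T g → SuppIn m k (S + T) (f * g)
  | 0, _, _, _, _, _, _, _ => trivial
  | (_+1), 0, S, T, f, g, hf, hg => fun d hd => by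
      rw [toLS_mul, HahnSeries.coeff_mul]
      apply Finset.sum_eq_zero
      rintro ⟨i, j⟩ hij
      rw [Finset.mem_addAntidiagonal] at hij
      by_cases hi : i ∈ S
      · have hj : j ∉ T := fun hj => hd ⟨i, hi, j, hj, hij.2.2⟩
        rw [hg j hj, mul_zero]
      · rw [hf i hi, zero_mul]
  | (m+1), (k+1), S, T, f, g, hf, hg => fun d => by
      rw [toLS_mul, HahnSeries.coeff_mul]
      apply suppIn_sum
      rintro ⟨i, j⟩ _
      exact suppIn_mul m k (hf i) (hg j)

lemma suppIn_one : ∀ (m k : ℕ), SuppIn m k {0} (1 : ILS m)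
  | 0, _ => trivial
  | (_+1), 0 => fun d hd => by
      show (1 : LaurentSeries _).coeff d = 0
      erw [HahnSeries.coeff_one, if_neg (by simpa using hd)]
  | (m+1), (k+1) => fun d => by
      show SuppIn m (k) {0} ((1 : LaurentSeries _).coeff d)
      erw [HahnSeries.coeff_one]
      split_ifs
      · exact suppIn_one m k
      · exact suppIn_zero m k _
lemma CTx_zeroth (k : ℕ) (f : ILS 0) : CTx 0 k f = f := rfl
lemma CTx_base (m : ℕ) (f : ILS (m+1)) :
    CTx (m+1) 0 f = ofLS (HahnSeries.C ((toLS f).coeff 0)) := rfl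
lemma CTx_step (m k : ℕ) (f : ILS (m+1)) :
    CTx (m+1) (k+1) f = ofLS ((toLS f).map (CTx m k)) := rfl

lemma CTx_add : ∀ (m k : ℕ) (f g : ILS m), CTx m k (f + g) = CTx m k f + CTx m k g
  | 0, _, _, _ => rfl
  | (_+1), 0, f, g => by
      rw [CTx_base, CTx_base, CTx_base, toLS_add, HahnSeries.coeff_add, map_add, ofLS_add]
  | (m+1), (k+1), f, g => by
      rw [CTx_step, CTx_step, CTx_step, ← ofLS_add]
      congr 1
      ext d
      simp only [HahnSeries.map_coeff, toLS_add, HahnSeries.coeff_add]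
      exact CTx_add m k _ _

lemma CTx_sum (m k : ℕ) {ι : Type*} (t : Finset ι) (F : ι → ILS m) :
    CTx m k (∑ i ∈ t, F i) = ∑ i ∈ t, CTx m k (F i) := by
  classical
  induction t using Finset.induction_on with
  | empty => simpa using (CTx m k).map_zero
  | insert _ _ hnot ih => rw [Finset.sum_insert hnot, Finset.sum_insert hnot, CTx_add, ih]

lemma CTx_neg (m k : ℕ) (f : ILS m) : CTx m k (-f) = - CTx m k f := by
  have := CTx_add m k f (-f)
  rw [add_neg_cancel, (CTx m k).map_zero] at this
  linear_combination -this

lemma CTx_sub (m k : ℕ) (f g : ILS m) : CTx m k (f - g) = CTx m k f - CTx m k g := by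
  rw [sub_eq_add_neg, CTx_add, CTx_neg, sub_eq_add_neg]

lemma CTx_eq_self_of_suppIn : ∀ (m k : ℕ) {f : ILS m}, SuppIn m k {0} f → CTx m k f = f
  | 0, _, _, _ => rfl
  | (_+1), 0, f, hf => by
      rw [CTx_base, ← ofLS_toLS f]
      congr 1
      ext d
      rw [HahnSeries.C_apply, HahnSeries.coeff_single]
      split_ifs with h
      · rw [h, toLS_ofLS]
      · exact (hf d (by simpa using h)).symm
  | (m+1), (k+1), f, hf => by
      rw [CTx_step, ← ofLS_toLS f]
      congr 1
      ext d
      rw [HahnSeries.map_coeff]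
      exact CTx_eq_self_of_suppIn m k (hf d)

lemma suppIn_of_CTx_eq_self : ∀ (m k : ℕ) {f : ILS m}, CTx m k f = f → SuppIn m k {0} f
  | 0, _, _, _ => trivial
  | (_+1), 0, f, hf => by
      intro d hd
      have : toLS f = HahnSeries.C ((toLS f).coeff 0) := (congrArg toLS hf).symm
      rw [this, HahnSeries.C_apply, HahnSeries.coeff_single_of_ne (by simpa using hd)]
  | (m+1), (k+1), f, hf => by
      intro d
      have : toLS f = (toLS f).map (CTx m k) := (congrArg toLS hf).symm
      apply suppIn_of_CTx_eq_self m k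
      conv_rhs => rw [this]
      rfl

lemma CTx_one (m k : ℕ) : CTx m k (1 : ILS m) = 1 :=
  CTx_eq_self_of_suppIn m k (suppIn_one m k)

lemma CTx_eq_zero_of_suppIn : ∀ (m k : ℕ), k < m → ∀ {S : Set ℤ} {f : ILS m},
    SuppIn m k S f → (0 : ℤ) ∉ S → CTx m k f = 0
  | 0, _, h, _, _, _, _ => absurd h (Nat.not_lt_zero _)
  | (_+1), 0, _, S, f, hf, h0 => by
      rw [CTx_base, hf 0 h0, map_zero, ofLS_zero]
  | (m+1), (k+1), hk, S, f, hf, h0 => by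
      rw [CTx_step, ← ofLS_zero]
      congr 1
      ext d
      rw [HahnSeries.map_coeff, HahnSeries.coeff_zero]
      exact CTx_eq_zero_of_suppIn m k (Nat.succ_lt_succ_iff.mp hk) (hf d) h0

lemma CTx_mul_fixed : ∀ (m k : ℕ) {a : ILS m}, CTx m k a = a → ∀ (f : ILS m),
    CTx m k (a * f) = a * CTx m k f
  | 0, _, _, _, _ => rfl
  | (_+1), 0, a, ha, f => by
      have hta : toLS a = HahnSeries.C ((toLS a).coeff 0) := (congrArg toLS ha).symm
      have h1 : (toLS (a * f)).coeff 0 = (toLS a).coeff 0 * (toLS f).coeff 0 := by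
        rw [toLS_mul]
        conv_lhs => rw [hta, HahnSeries.C_apply]
        exact HahnSeries.coeff_single_zero_mul
      rw [CTx_base, CTx_base, h1, map_mul, ofLS_mul]
      conv_rhs => rw [← ha, CTx_base]
  | (m+1), (k+1), a, ha, f => by
      have hta : toLS a = (toLS a).map (CTx m k) := (congrArg toLS ha).symm
      have hcoef : ∀ i, CTx m k ((toLS a).coeff i) = (toLS a).coeff i := by
        intro i
        conv_rhs => rw [hta]
        rfl
      rw [CTx_step, CTx_step]
      have : a * ofLS ((toLS f).map (CTx m k)) = ofLS (toLS a * (toLS f).map (CTx m k)) := rfl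
      rw [this]
      congr 1
      ext d
      have hsub : ((toLS f).map (CTx m k)).support ⊆ (toLS f).support := by
        intro j hj
        simp only [HahnSeries.mem_support, HahnSeries.map_coeff] at hj ⊢
        intro h
        rw [h] at hj
        exact hj ((CTx m k).map_zero)
      rw [HahnSeries.map_coeff, toLS_mul, HahnSeries.coeff_mul,
        HahnSeries.coeff_mul_right' (toLS f).isPWO_support hsub, CTx_sum]
      apply Finset.sum_congr rfl
      rintro ⟨i, j⟩ _
      simp only [HahnSeries.map_coeff]
      exact CTx_mul_fixed m k (hcoef i) _
lemma CTx_inv (m k : ℕ) {a : ILS m} (ha : CTx m k a = a) : CTx m k a⁻¹ = a⁻¹ := by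
  rcases eq_or_ne a 0 with rfl | h
  · rw [inv_zero]
    exact (CTx m k).map_zero
  · have h1 := CTx_mul_fixed m k ha a⁻¹
    rw [mul_inv_cancel₀ h, CTx_one] at h1
    exact eq_inv_of_mul_eq_one_right h1.symm

/-- The subfield of elements free of `x_k`. -/
def Kfix (m k : ℕ) : Subfield (ILS m) where
  carrier := {f | CTx m k f = f}
  mul_mem' := by
    intro a b ha hb
    simp only [Set.mem_setOf_eq] at *
    rw [CTx_mul_fixed m k ha, hb]
  one_mem' := CTx_one m k
  add_mem' := by
    intro a b ha hb
    simp only [Set.mem_setOf_eq] at *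
    rw [CTx_add, ha, hb]
  zero_mem' := (CTx m k).map_zero
  neg_mem' := by
    intro a ha
    simp only [Set.mem_setOf_eq] at *
    rw [CTx_neg, ha]
  inv_mem' := fun a ha => CTx_inv m k ha

lemma mem_Kfix {m k : ℕ} {f : ILS m} : f ∈ Kfix m k ↔ CTx m k f = f := Iff.rfl

lemma ILSc_succ (m : ℕ) (c : KK) : ILSc (m+1) c = ofLS (HahnSeries.C (ILSc m c)) := rfl
lemma ILSvar_zero (m : ℕ) : ILSvar (m+1) 0 = ofLS (HahnSeries.single (1:ℤ) 1) := rfl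
lemma ILSvar_succ (m k : ℕ) : ILSvar (m+1) (k+1) = ofLS (HahnSeries.C (ILSvar m k)) := rfl

lemma CTx_ofLS_C0 (m : ℕ) (y : ILS m) :
    CTx (m+1) 0 (ofLS (HahnSeries.C y)) = ofLS (HahnSeries.C y) := by
  rw [CTx_base, toLS_ofLS]
  congr 1
  simp only [HahnSeries.C_apply, HahnSeries.coeff_single_same]

lemma CTx_ofLS_C (m k : ℕ) (y : ILS m) :
    CTx (m+1) (k+1) (ofLS (HahnSeries.C y)) = ofLS (HahnSeries.C (CTx m k y)) := by
  rw [CTx_step, toLS_ofLS]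
  congr 1
  ext d
  rw [HahnSeries.map_coeff, HahnSeries.C_apply, HahnSeries.C_apply,
    HahnSeries.coeff_single, HahnSeries.coeff_single]
  split_ifs
  · rfl
  · exact (CTx m k).map_zero

lemma ILSc_fixed : ∀ (m k : ℕ) (c : KK), CTx m k (ILSc m c) = ILSc m c
  | 0, _, _ => rfl
  | (m+1), 0, c => CTx_ofLS_C0 m (ILSc m c)
  | (m+1), (k+1), c => by rw [ILSc_succ, CTx_ofLS_C, ILSc_fixed m k c]

lemma ILSvar_fixed : ∀ (m k i : ℕ), i ≠ k → CTx m k (ILSvar m i) = ILSvar m i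
  | 0, _, _, _ => rfl
  | (m+1), k, 0, h => by
      obtain ⟨j, rfl⟩ : ∃ j, k = j + 1 := ⟨k - 1, by omega⟩
      rw [ILSvar_zero, CTx_step, toLS_ofLS, HahnSeries.map_single, CTx_one]
  | (m+1), 0, (i+1), h => CTx_ofLS_C0 m (ILSvar m i)
  | (m+1), (k+1), (i+1), h => by
      rw [ILSvar_succ, CTx_ofLS_C, ILSvar_fixed m k i (by omega)]

lemma ILSvar_ne_zero : ∀ (m i : ℕ), ILSvar m i ≠ 0
  | 0, _ => one_ne_zero
  | (m+1), 0 => fun h => HahnSeries.single_ne_zero one_ne_zero (ofLS_injective (h.trans (ofLS_zero m).symm))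
  | (m+1), (i+1) => fun h =>
      HahnSeries.C_ne_zero (ILSvar_ne_zero m i) (ofLS_injective (h.trans (ofLS_zero m).symm))

lemma ILSc_ne_zero : ∀ (m : ℕ) {c : KK}, c ≠ 0 → ILSc m c ≠ 0
  | 0, _, hc => hc
  | (m+1), c, hc => fun h =>
      HahnSeries.C_ne_zero (ILSc_ne_zero m hc) (ofLS_injective (h.trans (ofLS_zero m).symm))

lemma ILSc_injective : ∀ (m : ℕ), Function.Injective (ILSc m)
  | 0 => fun _ _ h => h
  | (m+1) => fun a b h => ILSc_injective m (HahnSeries.C_injective (ofLS_injective h))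

lemma CTx_var_self : ∀ (m k : ℕ), k < m → CTx m k (ILSvar m k) = 0
  | 0, _, h => absurd h (Nat.not_lt_zero _)
  | (m+1), 0, _ => by
      rw [ILSvar_zero, CTx_base, toLS_ofLS, HahnSeries.coeff_single_of_ne (by norm_num),
        map_zero, ofLS_zero]
  | (m+1), (k+1), hk => by
      rw [ILSvar_succ, CTx_ofLS_C, CTx_var_self m k (by omega), map_zero, ofLS_zero]

lemma ofLS_zpow {m : ℕ} (a : LaurentSeries (ILS m)) (e : ℤ) : ofLS (a ^ e) = (ofLS a) ^ e :=
  map_zpow₀ (LSequiv m) a e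

lemma single_one_zpow {m : ℕ} (e : ℤ) :
    (HahnSeries.single (1:ℤ) (1 : ILS m)) ^ e = HahnSeries.single e 1 := by
  have hnat : ∀ n : ℕ, (HahnSeries.single (1:ℤ) (1 : ILS m)) ^ n = HahnSeries.single (n:ℤ) 1 := by
    intro n
    induction n with
    | zero =>
      rw [pow_zero, Nat.cast_zero, ← HahnSeries.C_apply, HahnSeries.C_one]
    | succ n ih =>
      rw [pow_succ, ih, HahnSeries.single_mul_single, one_mul]
      norm_num
  have hinv : ∀ a : ℤ, (HahnSeries.single a (1 : ILS m))⁻¹ = HahnSeries.single (-a) 1 := by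
    intro a
    refine (eq_inv_of_mul_eq_one_right ?_).symm
    rw [HahnSeries.single_mul_single, one_mul, add_neg_cancel]
    exact HahnSeries.C_one (Γ := ℤ)
  cases e with
  | ofNat n => rw [Int.ofNat_eq_coe, zpow_natCast, hnat]
  | negSucc n =>
    rw [zpow_negSucc, hnat, hinv]
    congr 1

lemma ILSvar_zero_zpow (m : ℕ) (e : ℤ) :
    (ILSvar (m+1) 0) ^ e = ofLS (HahnSeries.single e 1) := by
  rw [ILSvar_zero, ← ofLS_zpow, single_one_zpow]

lemma suppIn_ofLS_C {m k : ℕ} {S : Set ℤ} {y : ILS m} (hy : SuppIn m k S y) :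
    SuppIn (m+1) (k+1) S (ofLS (HahnSeries.C y)) := by
  intro d
  show SuppIn m k S ((HahnSeries.C y).coeff d)
  rw [HahnSeries.C_apply, HahnSeries.coeff_single]
  split_ifs
  · exact hy
  · exact suppIn_zero m k S

lemma suppIn_var_zpow : ∀ (m k : ℕ), k < m → ∀ e : ℤ, SuppIn m k {e} ((ILSvar m k) ^ e)
  | 0, _, h, _ => absurd h (Nat.not_lt_zero _)
  | (m+1), 0, _, e => by
      rw [ILSvar_zero_zpow]
      intro d hd
      rw [toLS_ofLS, HahnSeries.coeff_single_of_ne (by simpa using hd)]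
  | (m+1), (k+1), hk, e => by
      rw [ILSvar_succ, ← ofLS_zpow, ← map_zpow₀ (HahnSeries.C (Γ := ℤ))]
      exact suppIn_ofLS_C (suppIn_var_zpow m k (by omega) e)

lemma CTx_var_zpow (m k : ℕ) (h : k < m) {e : ℤ} (he : e ≠ 0) :
    CTx m k ((ILSvar m k) ^ e) = 0 :=
  CTx_eq_zero_of_suppIn m k h (suppIn_var_zpow m k h e) (by simpa using (Ne.symm he))
lemma isPWO_of_Ici {a : ℤ} {S : Set ℤ} (hS : S ⊆ Set.Ici a) : S.IsPWO :=
  (Set.IsWF.isPWO (BddBelow.wellFoundedOn_lt bddBelow_Ici)).mono hS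

/-- The inverse of the expression, one layer down. -/
lemma expr_succ (m k i : ℕ) (c : KK) :
    (1 - ILSvar (m+1) (k+1) * (ILSc (m+1) c * ILSvar (m+1) (i+1))⁻¹)⁻¹
      = ofLS (HahnSeries.C ((1 - ILSvar m k * (ILSc m c * ILSvar m i)⁻¹)⁻¹)) := by
  symm
  rw [map_inv₀, map_sub, map_one, map_mul, map_inv₀, map_mul,
    ofLS_inv, ofLS_sub, ofLS_one, ofLS_mul, ofLS_inv, ofLS_mul,
    ← ILSc_succ, ← ILSvar_succ, ← ILSvar_succ]

lemma CTx_geom_lt : ∀ (m k i : ℕ), k < m → k < i → ∀ {c : KK}, c ≠ 0 →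
    CTx m k ((1 - ILSvar m k * (ILSc m c * ILSvar m i)⁻¹)⁻¹) = 1
  | 0, _, _, hm, _, _, _ => absurd hm (Nat.not_lt_zero _)
  | (m+1), 0, 0, _, hi, _, _ => absurd hi (lt_irrefl 0)
  | (m+1), 0, (i+1), _, _, c, hc => by
      set u : ILS m := ILSc m c * ILSvar m i with hu_def
      have hu : u ≠ 0 := mul_ne_zero (ILSc_ne_zero m hc) (ILSvar_ne_zero m i)
      set b : ILS m := u⁻¹ with hb_def
      have h1 : ILSc (m+1) c * ILSvar (m+1) (i+1) = ofLS (HahnSeries.C u) := by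
        rw [ILSc_succ, ILSvar_succ, ← ofLS_mul, ← map_mul]
      have h2 : ILSvar (m+1) 0 * (ILSc (m+1) c * ILSvar (m+1) (i+1))⁻¹
          = ofLS (HahnSeries.single (1:ℤ) b) := by
        rw [h1, ← ofLS_inv, ← map_inv₀, ILSvar_zero, ← ofLS_mul, HahnSeries.C_apply,
          HahnSeries.single_mul_single, one_mul, add_zero]
      set g : LaurentSeries (ILS m) :=
        ⟨fun d => if 0 ≤ d then b ^ d.toNat else 0, by
          apply isPWO_of_Ici (a := 0)
          intro d hd
          simp only [Function.mem_support] at hd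
          by_contra hlt
          exact hd (if_neg hlt)⟩ with hg_def
      have hgc : ∀ d : ℤ, g.coeff d = if 0 ≤ d then b ^ d.toNat else 0 := fun d => rfl
      have hmul : (1 - HahnSeries.single (1:ℤ) b) * g = 1 := by
        ext d
        rw [sub_mul, one_mul, HahnSeries.coeff_sub]
        have hd : d = (d - 1) + 1 := by ring
        rw [hd, HahnSeries.coeff_single_mul_add, ← hd, hgc, hgc, HahnSeries.coeff_one]
        rcases lt_trichotomy d 0 with h | h | h
        · rw [if_neg (by omega), if_neg (by omega), if_neg (by omega), mul_zero, sub_zero]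
        · subst h
          norm_num
        · rw [if_pos (by omega), if_pos (by omega), if_neg (by omega)]
          have : d.toNat = (d - 1).toNat + 1 := by omega
          rw [this, pow_succ, mul_comm (b ^ (d-1).toNat) b, sub_self]
      have hinv : (1 - ILSvar (m+1) 0 * (ILSc (m+1) c * ILSvar (m+1) (i+1))⁻¹)⁻¹ = ofLS g := by
        apply inv_eq_of_mul_eq_one_right
        rw [h2]
        calc (1 - ofLS (HahnSeries.single (1:ℤ) b)) * ofLS g
            = ofLS ((1 - HahnSeries.single (1:ℤ) b) * g) := by
              rw [ofLS_mul, ofLS_sub, ofLS_one]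
          _ = 1 := by rw [hmul, ofLS_one]
      rw [hinv, CTx_base, toLS_ofLS, hgc]
      have h0 : (if (0:ℤ) ≤ 0 then b ^ (0:ℤ).toNat else 0) = (1 : ILS m) := by norm_num
      rw [h0]
      exact (congrArg ofLS (HahnSeries.C_one)).trans ofLS_one
  | (m+1), (k+1), 0, _, hi, _, _ => absurd hi (by omega)
  | (m+1), (k+1), (i+1), hm, hi, c, hc => by
      rw [expr_succ, CTx_ofLS_C, CTx_geom_lt m k i (by omega) (by omega) hc,
        HahnSeries.C_one, ofLS_one]

lemma CTx_geom_gt : ∀ (m k i : ℕ), k < m → i < k → ∀ {c : KK}, c ≠ 0 →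
    CTx m k ((1 - ILSvar m k * (ILSc m c * ILSvar m i)⁻¹)⁻¹) = 0
  | 0, _, _, hm, _, _, _ => absurd hm (Nat.not_lt_zero _)
  | (m+1), 0, _, _, hi, _, _ => absurd hi (Nat.not_lt_zero _)
  | (m+1), (k+1), 0, hm, _, c, hc => by
      have hkm : k < m := by omega
      set cb : ILS m := ILSc m c with hcb_def
      have hcb : cb ≠ 0 := ILSc_ne_zero m hc
      set xb : ILS m := ILSvar m k with hxb_def
      have hxb : xb ≠ 0 := ILSvar_ne_zero m k
      set u : ILS m := xb * cb⁻¹ with hu_def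
      have hu : u ≠ 0 := mul_ne_zero hxb (inv_ne_zero hcb)
      have h1 : ILSc (m+1) c * ILSvar (m+1) 0 = ofLS (HahnSeries.single (1:ℤ) cb) := by
        rw [ILSc_succ, ILSvar_zero, ← ofLS_mul, HahnSeries.C_apply,
          HahnSeries.single_mul_single, zero_add, mul_one]
      have h2 : (HahnSeries.single (1:ℤ) cb)⁻¹ = HahnSeries.single (-1 : ℤ) cb⁻¹ := by
        refine (eq_inv_of_mul_eq_one_right ?_).symm
        rw [HahnSeries.single_mul_single, add_neg_cancel, mul_inv_cancel₀ hcb]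
        exact HahnSeries.C_one (Γ := ℤ)
      have h3 : ILSvar (m+1) (k+1) * (ILSc (m+1) c * ILSvar (m+1) 0)⁻¹
          = ofLS (HahnSeries.single (-1 : ℤ) u) := by
        rw [h1, ← ofLS_inv, h2, ILSvar_succ, ← ofLS_mul, HahnSeries.C_apply,
          HahnSeries.single_mul_single, zero_add]
      set g : LaurentSeries (ILS m) :=
        ⟨fun d => if 1 ≤ d then -(u⁻¹ ^ d.toNat) else 0, by
          apply isPWO_of_Ici (a := 1)
          intro d hd
          simp only [Function.mem_support] at hd
          by_contra hlt
          exact hd (if_neg hlt)⟩ with hg_def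
      have hgc : ∀ d : ℤ, g.coeff d = if 1 ≤ d then -(u⁻¹ ^ d.toNat) else 0 := fun d => rfl
      have hmul : (1 - HahnSeries.single (-1 : ℤ) u) * g = 1 := by
        ext d
        rw [sub_mul, one_mul, HahnSeries.coeff_sub]
        have hd : d = (d + 1) + (-1) := by ring
        rw [hd, HahnSeries.coeff_single_mul_add, ← hd, hgc, hgc, HahnSeries.coeff_one]
        rcases lt_trichotomy d 0 with h | h | h
        · rw [if_neg (by omega), if_neg (by omega), if_neg (by omega), mul_zero, sub_zero]
        · subst h
          rw [if_neg (by omega), if_pos (by omega), if_pos rfl]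
          have : (0 + 1 : ℤ).toNat = 1 := rfl
          rw [this, pow_one, mul_neg, mul_inv_cancel₀ hu, zero_sub, neg_neg]
        · rw [if_pos (by omega), if_pos (by omega), if_neg (by omega)]
          have : (d + 1).toNat = d.toNat + 1 := by omega
          rw [this, pow_succ, mul_neg, mul_comm (u⁻¹ ^ d.toNat) u⁻¹, ← mul_assoc,
            mul_inv_cancel₀ hu, one_mul, sub_neg_eq_add, neg_add_cancel]
      have hinv : (1 - ILSvar (m+1) (k+1) * (ILSc (m+1) c * ILSvar (m+1) 0)⁻¹)⁻¹ = ofLS g := by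
        apply inv_eq_of_mul_eq_one_right
        rw [h3]
        calc (1 - ofLS (HahnSeries.single (-1:ℤ) u)) * ofLS g
            = ofLS ((1 - HahnSeries.single (-1:ℤ) u) * g) := by
              rw [ofLS_mul, ofLS_sub, ofLS_one]
          _ = 1 := by rw [hmul, ofLS_one]
      rw [hinv, CTx_step, toLS_ofLS, ← ofLS_zero m]
      congr 1
      ext d
      rw [HahnSeries.map_coeff, hgc, HahnSeries.coeff_zero]
      split_ifs with hd
      · have hul : u⁻¹ ^ d.toNat = cb ^ d.toNat * xb ^ (-(d.toNat : ℤ)) := by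
          rw [hu_def, mul_inv_rev, inv_inv, mul_pow, inv_pow, zpow_neg, zpow_natCast]
        rw [hul, CTx_neg, CTx_mul_fixed m k (by
            have := mem_Kfix.mpr (ILSc_fixed m k c)
            exact mem_Kfix.mp (pow_mem this d.toNat)),
          CTx_var_zpow m k hkm (by omega), mul_zero, neg_zero]
      · exact (CTx m k).map_zero
  | (m+1), (k+1), (i+1), hm, hi, c, hc => by
      rw [expr_succ, CTx_ofLS_C, CTx_geom_gt m k i (by omega) (by omega) hc,
        HahnSeries.C_zero, ofLS_zero]
open Polynomial in
lemma poly_mod_interp {FF : Type*} [Field FF] (mm e : ℕ)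
    (w : Fin mm → FF) (hwinj : Function.Injective w) :
    (X ^ e) %ₘ (Lagrange.nodal Finset.univ w)
      = ∑ r, Polynomial.C (w r ^ e * (∏ s ∈ Finset.univ.erase r, (w r - w s)⁻¹)) *
          ∏ s ∈ Finset.univ.erase r, (X - Polynomial.C (w s)) := by
  classical
  have hinj : Set.InjOn w (↑(Finset.univ : Finset (Fin mm)) : Set (Fin mm)) := fun a _ b _ h => hwinj h
  have hmonic : (Lagrange.nodal Finset.univ w).Monic := Lagrange.nodal_monic
  have hdegP : (Lagrange.nodal Finset.univ w).degree = (Finset.univ : Finset (Fin mm)).card :=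
    Lagrange.degree_nodal
  have hdegR : ((X ^ e) %ₘ (Lagrange.nodal Finset.univ w)).degree
      < (Finset.univ : Finset (Fin mm)).card := by
    rw [← hdegP]
    exact Polynomial.degree_modByMonic_lt _ hmonic
  have hkey := Polynomial.modByMonic_add_div (X ^ e : FF[X]) (Lagrange.nodal Finset.univ w)
  have heval : ∀ r : Fin mm, ((X ^ e) %ₘ (Lagrange.nodal Finset.univ w)).eval (w r)
      = w r ^ e := by
    intro r
    have := congrArg (Polynomial.eval (w r)) hkey
    rw [eval_add, eval_mul, Lagrange.eval_nodal_at_node (Finset.mem_univ r), zero_mul,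
      add_zero, eval_pow, eval_X] at this
    exact this
  have hR := Lagrange.eq_interpolate_of_eval_eq hinj hdegR
    (r := fun i => w i ^ e) (fun i _ => heval i)
  rw [hR, Lagrange.interpolate_apply]
  apply Finset.sum_congr rfl
  intro r _
  rw [Lagrange.basis]
  unfold Lagrange.basisDivisor
  rw [Finset.prod_mul_distrib, ← map_prod, ← mul_assoc, ← map_mul]

open Polynomial in
lemma poly_div_coeff_zero {FF : Type*} [Field FF] (mm e : ℕ) (he : 1 ≤ e)
    (w : Fin mm → FF) (hwinj : Function.Injective w) (hw0 : ∀ r, w r ≠ 0) :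
    ((X ^ e) /ₘ (Lagrange.nodal Finset.univ w)).coeff 0
      = ∑ r, w r ^ (e - 1) * (∏ s ∈ Finset.univ.erase r, (w r - w s)⁻¹) := by
  classical
  have hmonic : (Lagrange.nodal Finset.univ w).Monic := Lagrange.nodal_monic
  have hkey := Polynomial.modByMonic_add_div (X ^ e : FF[X]) (Lagrange.nodal Finset.univ w)
  have h0 := congrArg (Polynomial.eval 0) hkey
  rw [eval_add, eval_mul, eval_pow, eval_X, zero_pow (by omega : e ≠ 0)] at h0
  have hP0 : (Lagrange.nodal Finset.univ w).eval 0 = ∏ s, (0 - w s) := Lagrange.eval_nodal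
  have hR0 : ((X ^ e) %ₘ (Lagrange.nodal Finset.univ w)).eval 0
      = ∑ r, w r ^ e * (∏ s ∈ Finset.univ.erase r, (w r - w s)⁻¹) *
          ∏ s ∈ Finset.univ.erase r, (0 - w s) := by
    rw [poly_mod_interp mm e w hwinj]
    rw [eval_finset_sum]
    apply Finset.sum_congr rfl
    intro r _
    rw [eval_mul, Polynomial.eval_C, eval_prod]
    simp only [eval_sub, eval_X, Polynomial.eval_C]
  have hP0ne : (Lagrange.nodal Finset.univ w).eval 0 ≠ 0 := by
    rw [hP0]
    exact Finset.prod_ne_zero_iff.mpr fun s _ => by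
      simpa [sub_eq_zero] using hw0 s
  rw [Polynomial.coeff_zero_eq_eval_zero]
  have hgoal : ((X ^ e) /ₘ (Lagrange.nodal Finset.univ w)).eval 0 *
      (Lagrange.nodal Finset.univ w).eval 0
      = (∑ r, w r ^ (e - 1) * (∏ s ∈ Finset.univ.erase r, (w r - w s)⁻¹)) *
        (Lagrange.nodal Finset.univ w).eval 0 := by
    have hQR : ((X ^ e) /ₘ (Lagrange.nodal Finset.univ w)).eval 0 *
        (Lagrange.nodal Finset.univ w).eval 0
        = - ((X ^ e) %ₘ (Lagrange.nodal Finset.univ w)).eval 0 := by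
      linear_combination h0
    rw [hQR, hR0, hP0, Finset.sum_mul, ← Finset.sum_neg_distrib]
    apply Finset.sum_congr rfl
    intro r _
    have hsplit : ∏ s, (0 - w s) = (0 - w r) * ∏ s ∈ Finset.univ.erase r, (0 - w s) :=
      (Finset.mul_prod_erase Finset.univ _ (Finset.mem_univ r)).symm
    rw [hsplit]
    have hpow : w r ^ (e - 1) * w r = w r ^ e := by
      rw [← pow_succ]
      congr 1
      omega
    ring_nf
    linear_combination (∏ s ∈ Finset.univ.erase r, (w r - w s)⁻¹) *
      (∏ s ∈ Finset.univ.erase r, -w s) * hpow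
  exact mul_right_cancel₀ hP0ne hgoal
open Polynomial in
lemma CT_per_d (N k : ℕ) (hk : k < N) (mm : ℕ) (hm : 1 ≤ mm)
    (idx : Fin mm → ℕ) (hidx_ne : ∀ r, idx r ≠ k)
    (c : Fin mm → KK) (hc0 : ∀ r, c r ≠ 0)
    (hVne : ∀ r s : Fin mm, r ≠ s →
      ILSc N (c r) * ILSvar N (idx r) ≠ ILSc N (c s) * ILSvar N (idx s))
    (d : ℤ) (hd : d ≤ (mm : ℤ) - 1) :
    CTx N k ((ILSvar N k) ^ d *
        (∏ r, (1 - ILSvar N k * (ILSc N (c r) * ILSvar N (idx r))⁻¹))⁻¹) =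
      ∑ r ∈ Finset.univ.filter (fun r : Fin mm => k < idx r),
        (ILSc N (c r) * ILSvar N (idx r)) ^ d *
          (∏ s ∈ Finset.univ.filter (fun s : Fin mm => s ≠ r),
            (1 - (ILSc N (c r) * ILSvar N (idx r)) *
              (ILSc N (c s) * ILSvar N (idx s))⁻¹))⁻¹ := by
  classical
  set XX : ILS N := ILSvar N k with hXdef
  set V : Fin mm → ILS N := fun r => ILSc N (c r) * ILSvar N (idx r) with hVdef
  have hX0 : XX ≠ 0 := ILSvar_ne_zero N k
  have hV0 : ∀ r, V r ≠ 0 := fun r =>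
    mul_ne_zero (ILSc_ne_zero N (hc0 r)) (ILSvar_ne_zero N _)
  have hVfix : ∀ r, V r ∈ Kfix N k := fun r =>
    mul_mem (mem_Kfix.mpr (ILSc_fixed N k (c r)))
      (mem_Kfix.mpr (ILSvar_fixed N k _ (hidx_ne r)))
  have hCTX : CTx N k XX = 0 := CTx_var_self N k hk
  have hXV : ∀ r, XX ≠ V r := by
    intro r h
    have h2 : CTx N k XX = CTx N k (V r) := by rw [h]
    rw [hCTX, mem_Kfix.mp (hVfix r)] at h2
    exact hV0 r h2.symm
  -- the subfield elements w r = (V r)⁻¹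
  set w : Fin mm → (Kfix N k) := fun r => ⟨(V r)⁻¹, inv_mem (hVfix r)⟩ with hwdef
  have hwcoe : ∀ r, ((w r : Kfix N k) : ILS N) = (V r)⁻¹ := fun r => rfl
  have hwinj : Function.Injective w := by
    intro r s h
    by_contra hne
    exact hVne r s hne (inv_injective (congrArg Subtype.val h))
  have hw0 : ∀ r, w r ≠ 0 := by
    intro r h
    exact inv_ne_zero (hV0 r) (congrArg Subtype.val h)
  -- exponent bookkeeping
  set e : ℕ := ((mm : ℤ) - d).toNat with hedef
  have he : (e : ℤ) = (mm : ℤ) - d := Int.toNat_of_nonneg (by omega)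
  have he1 : 1 ≤ e := by omega
  -- the evaluation homomorphism
  set φ : (Kfix N k)[X] →+* ILS N := Polynomial.eval₂RingHom (Kfix N k).subtype XX⁻¹ with hφdef
  have hφC : ∀ a : Kfix N k, φ (Polynomial.C a) = (a : ILS N) := fun a => by
    rw [hφdef, coe_eval₂RingHom, eval₂_C, Subfield.coe_subtype]
  have hφX : φ X = XX⁻¹ := by rw [hφdef, coe_eval₂RingHom, eval₂_X]
  set P : (Kfix N k)[X] := Lagrange.nodal Finset.univ w with hPdef
  set Q : (Kfix N k)[X] := (X ^ e) /ₘ P with hQdef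
  set R : (Kfix N k)[X] := (X ^ e) %ₘ P with hRdef
  have hkey : R + P * Q = X ^ e := Polynomial.modByMonic_add_div _ _
  have hkeyF : φ R + φ P * φ Q = (XX⁻¹) ^ e := by
    have := congrArg φ hkey
    rwa [map_add, map_mul, map_pow, hφX] at this
  have hφP : φ P = ∏ r, (XX⁻¹ - (V r)⁻¹) := by
    rw [hPdef, Lagrange.nodal, map_prod]
    apply Finset.prod_congr rfl
    intro r _
    rw [map_sub, hφX, hφC, hwcoe]
  have hYne : ∀ r, XX⁻¹ - (V r)⁻¹ ≠ 0 := fun r =>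
    sub_ne_zero_of_ne (fun h => hXV r (inv_injective h))
  have hφPne : φ P ≠ 0 := by
    rw [hφP]
    exact Finset.prod_ne_zero_iff.mpr fun r _ => hYne r
  have hden : ∀ r, 1 - XX * (V r)⁻¹ = XX * (XX⁻¹ - (V r)⁻¹) := by
    intro r
    rw [mul_sub, mul_inv_cancel₀ hX0]
  have hden0 : ∀ r, 1 - XX * (V r)⁻¹ ≠ 0 := by
    intro r
    rw [hden r]
    exact mul_ne_zero hX0 (hYne r)
  set g : Fin mm → ILS N := fun r => (1 - XX * (V r)⁻¹)⁻¹ with hgdef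
  have hg0 : ∀ r, g r ≠ 0 := fun r => inv_ne_zero (hden0 r)
  have hprod : ∏ r, (1 - XX * (V r)⁻¹) = XX ^ mm * φ P := by
    rw [hφP]
    rw [Finset.prod_congr rfl (fun r _ => hden r), Finset.prod_mul_distrib,
      Finset.prod_const, Finset.card_univ, Fintype.card_fin]
  -- step: the expression as image of polynomials
  have hzpow : XX ^ d * ((XX ^ mm : ILS N))⁻¹ = (XX⁻¹) ^ e := by
    rw [inv_pow, ← zpow_natCast XX mm, ← zpow_natCast XX e, ← zpow_neg, ← zpow_neg,
      ← zpow_add₀ hX0]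
    congr 1
    omega
  have hE : XX ^ d * (∏ r, (1 - XX * (V r)⁻¹))⁻¹ = φ Q + φ R * (φ P)⁻¹ := by
    rw [hprod, mul_inv, ← mul_assoc, hzpow, ← hkeyF]
    field_simp
    ring
  -- the coefficients A r, matching the goal
  set A : Fin mm → ILS N := fun r => (V r) ^ d *
      (∏ s ∈ Finset.univ.filter (fun s : Fin mm => s ≠ r), (1 - V r * (V s)⁻¹))⁻¹ with hAdef
  have hAeq : ∀ r, A r =
      ((w r ^ (e-1) * ∏ s ∈ Finset.univ.erase r, (w r - w s)⁻¹ : Kfix N k) : ILS N) := by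
    intro r
    have hcoe : ((w r ^ (e-1) * ∏ s ∈ Finset.univ.erase r, (w r - w s)⁻¹ : Kfix N k) : ILS N)
        = (V r)⁻¹ ^ (e-1) * ∏ s ∈ Finset.univ.erase r, ((V r)⁻¹ - (V s)⁻¹)⁻¹ := by
      push_cast
      rfl
    rw [hcoe]
    simp only [hAdef]
    have hfac : ∀ s ∈ Finset.univ.erase r, 1 - V r * (V s)⁻¹ =
        (V r) * ((V r)⁻¹ - (V s)⁻¹) := by
      intro s _
      rw [mul_sub, mul_inv_cancel₀ (hV0 r)]
    rw [Finset.filter_ne', Finset.prod_congr rfl hfac, Finset.prod_mul_distrib,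
      Finset.prod_const, Finset.card_erase_of_mem (Finset.mem_univ r),
      Finset.card_univ, Fintype.card_fin, mul_inv, ← Finset.prod_inv_distrib]
    rw [← mul_assoc]
    congr 1
    -- (V r)^d * ((V r)^(mm-1))⁻¹ = ((V r)⁻¹)^(e-1)
    rw [inv_pow, ← zpow_natCast (V r) (mm-1), ← zpow_natCast (V r) (e-1), ← zpow_neg,
      ← zpow_neg, ← zpow_add₀ (hV0 r)]
    congr 1
    omega
  have hAfix : ∀ r, A r ∈ Kfix N k := by
    intro r
    rw [hAeq r]
    exact SetLike.coe_mem _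
  -- partial fractions
  have hφR : φ R = ∑ r, ((w r ^ e * ∏ s ∈ Finset.univ.erase r, (w r - w s)⁻¹ : Kfix N k) : ILS N) *
      ∏ s ∈ Finset.univ.erase r, (XX⁻¹ - (V s)⁻¹) := by
    have := congrArg φ (poly_mod_interp mm e w hwinj)
    rw [map_sum] at this
    rw [hRdef, this]
    apply Finset.sum_congr rfl
    intro r _
    rw [map_mul, hφC, map_prod]
    congr 1
    apply Finset.prod_congr rfl
    intro s _
    rw [map_sub, hφX, hφC, hwcoe]
  have hfrac : φ R * (φ P)⁻¹ = ∑ r, A r * (g r - 1) := by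
    rw [hφR, Finset.sum_mul]
    apply Finset.sum_congr rfl
    intro r _
    have hsplit : ∏ s, (XX⁻¹ - (V s)⁻¹) =
        (XX⁻¹ - (V r)⁻¹) * ∏ s ∈ Finset.univ.erase r, (XX⁻¹ - (V s)⁻¹) :=
      (Finset.mul_prod_erase Finset.univ _ (Finset.mem_univ r)).symm
    have herasene : (∏ s ∈ Finset.univ.erase r, (XX⁻¹ - (V s)⁻¹)) ≠ 0 :=
      Finset.prod_ne_zero_iff.mpr fun s _ => hYne s
    have hg1 : (1 - XX * (V r)⁻¹) * g r = 1 := mul_inv_cancel₀ (hden0 r)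
    have hYW : (XX⁻¹ - (V r)⁻¹)⁻¹ = XX * g r := by
      have h3 : XX * g r * (XX⁻¹ - (V r)⁻¹) = 1 := by
        rw [show XX * g r * (XX⁻¹ - (V r)⁻¹) = (XX * (XX⁻¹ - (V r)⁻¹)) * g r from by ring,
          ← hden r]
        exact hg1
      exact inv_eq_of_mul_eq_one_left h3
    have hpow : w r ^ e = w r ^ (e-1) * w r := by
      rw [← pow_succ]
      congr 1
      omega
    have hcoe2 : ((w r ^ e * ∏ s ∈ Finset.univ.erase r, (w r - w s)⁻¹ : Kfix N k) : ILS N)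
        = A r * (V r)⁻¹ := by
      rw [hpow, hAeq r]
      push_cast
      ring
    have hcancel : ∀ a y z : ILS N, z ≠ 0 → (a * z) * (y * z⁻¹) = a * y := by
      intro a y z hz
      field_simp
    have hgm1 : g r - 1 = XX * (V r)⁻¹ * g r := by
      have h2 : g r - (1 - XX * (V r)⁻¹) * g r = XX * (V r)⁻¹ * g r := by ring
      rw [← h2, hg1]
    rw [hφP, hsplit, mul_inv, hcoe2,
      hcancel (A r * (V r)⁻¹) ((XX⁻¹ - (V r)⁻¹)⁻¹) _ herasene, hYW, hgm1]
    ring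
  -- constant term of φ Q
  have hCTcoe : ∀ a : Kfix N k, CTx N k ((a : ILS N)) = (a : ILS N) := fun a =>
    mem_Kfix.mp (SetLike.coe_mem a)
  have hCTφQ : CTx N k (φ Q) = ((Q.coeff 0 : Kfix N k) : ILS N) := by
    have hφQ : φ Q = ∑ j ∈ Q.support, ((Q.coeff j : Kfix N k) : ILS N) * (XX⁻¹) ^ j := by
      rw [hφdef, coe_eval₂RingHom, Polynomial.eval₂_eq_sum, Polynomial.sum_def]
      apply Finset.sum_congr rfl
      intro j _
      rw [Subfield.coe_subtype]
    rw [hφQ, CTx_sum]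
    have hterm : ∀ j ∈ Q.support, CTx N k (((Q.coeff j : Kfix N k) : ILS N) * (XX⁻¹) ^ j)
        = if j = 0 then ((Q.coeff 0 : Kfix N k) : ILS N) else 0 := by
      intro j _
      rw [CTx_mul_fixed N k (hCTcoe _)]
      rcases eq_or_ne j 0 with rfl | hj
      · rw [pow_zero, CTx_one, mul_one, if_pos rfl]
      · rw [if_neg hj]
        have : (XX⁻¹) ^ j = XX ^ (-(j:ℤ)) := by
          rw [inv_pow, ← zpow_natCast XX j, ← zpow_neg]
        rw [this, CTx_var_zpow N k hk (by omega), mul_zero]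
    rw [Finset.sum_congr rfl hterm, Finset.sum_ite_eq' Q.support 0
      (fun _ => ((Q.coeff 0 : Kfix N k) : ILS N))]
    split_ifs with h0
    · rfl
    · rw [Polynomial.notMem_support_iff.mp h0]
      norm_num
  have hQ0 : ((Q.coeff 0 : Kfix N k) : ILS N) = ∑ r, A r := by
    rw [hQdef, poly_div_coeff_zero mm e he1 w hwinj hw0]
    push_cast
    apply Finset.sum_congr rfl
    intro r _
    rw [hAeq r]
    push_cast
    rfl
  -- CT of the geometric factors
  have hCTg : ∀ r, CTx N k (g r) = if k < idx r then 1 else 0 := by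
    intro r
    rw [hgdef]
    simp only
    rw [hXdef, hVdef]
    simp only
    rcases Nat.lt_or_ge k (idx r) with h | h
    · rw [if_pos h]
      exact CTx_geom_lt N k (idx r) hk h (hc0 r)
    · rw [if_neg (by omega)]
      exact CTx_geom_gt N k (idx r) hk (by have := hidx_ne r; omega) (hc0 r)
  -- put everything together
  rw [hE, CTx_add, hfrac, CTx_sum, hCTφQ, hQ0]
  have hterm2 : ∀ r : Fin mm, CTx N k (A r * (g r - 1))
      = A r * ((if k < idx r then 1 else 0) - 1) := by
    intro r
    rw [CTx_mul_fixed N k (mem_Kfix.mp (hAfix r)), CTx_sub, CTx_one, hCTg r]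
  rw [Finset.sum_congr rfl (fun r _ => hterm2 r), ← Finset.sum_add_distrib]
  rw [Finset.sum_filter]
  apply Finset.sum_congr rfl
  intro r _
  split_ifs with h
  · ring
  · ring
/-- **Lemma 4.1 (Gessel–Xin constant-term extraction).** Work in
`K⟨⟨x_n,…,x_0⟩⟩ = ILS (n+1)`.  Let `m ≥ 1`, `k ≤ n`, and let
`p = ∑_{d ∈ D} u_d x_k^d` be a Laurent polynomial in `x_k` of degree at most
`m-1` (each exponent `d ≤ m-1`, each coefficient `u_d` free of `x_k`).  Let
`0 ≤ i_1 ≤ ⋯ ≤ i_m ≤ n` with all `i_r ≠ k`, and `c_1,…,c_m ∈ K∖{0}` with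
`c_r ≠ c_s` whenever `i_r = i_s`.  Then, for
`f = p / ∏_{r=1}^m (1 - x_k/(c_r x_{i_r}))`,
`CT_{x_k} f = ∑_{r : i_r > k} (f ⋅ (1 - x_k/(c_r x_{i_r})))|_{x_k = c_r x_{i_r}}`,
the substitution `x_k = c_r x_{i_r}` being performed in the expression
`f ⋅ (1 - x_k/(c_r x_{i_r})) = p / ∏_{s ≠ r} (1 - x_k/(c_s x_{i_s}))`. -/
theorem gessel_xin_extraction (n m : ℕ) (hm : 1 ≤ m) (k : ℕ) (hk : k ≤ n)
    (idx : Fin m → ℕ) (hidx_le : ∀ r, idx r ≤ n) (hidx_ne : ∀ r, idx r ≠ k)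
    (hidx_mono : Monotone idx)
    (c : Fin m → KK) (hc0 : ∀ r, c r ≠ 0)
    (hcne : ∀ r s : Fin m, r ≠ s → idx r = idx s → c r ≠ c s)
    (Dset : Finset ℤ) (hD : ∀ d ∈ Dset, d ≤ (m : ℤ) - 1)
    (u : ℤ → ILS (n+1)) (hu : ∀ d, CTx (n+1) k (u d) = u d) :
    CTx (n+1) k ((∑ d ∈ Dset, u d * (ILSvar (n+1) k) ^ d) *
        (∏ r, (1 - ILSvar (n+1) k * (ILSc (n+1) (c r) * ILSvar (n+1) (idx r))⁻¹))⁻¹) =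
      ∑ r ∈ Finset.univ.filter (fun r : Fin m => k < idx r),
        (∑ d ∈ Dset, u d * (ILSc (n+1) (c r) * ILSvar (n+1) (idx r)) ^ d) *
          (∏ s ∈ Finset.univ.filter (fun s : Fin m => s ≠ r),
            (1 - (ILSc (n+1) (c r) * ILSvar (n+1) (idx r)) *
              (ILSc (n+1) (c s) * ILSvar (n+1) (idx s))⁻¹))⁻¹ := by
  classical
  have hkN : k < n + 1 := by omega
  have hVne : ∀ r s : Fin m, r ≠ s →
      ILSc (n+1) (c r) * ILSvar (n+1) (idx r) ≠ ILSc (n+1) (c s) * ILSvar (n+1) (idx s) := by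
    intro r s hrs h
    rcases eq_or_ne (idx r) (idx s) with hi | hi
    · rw [hi] at h
      have h2 := mul_right_cancel₀ (ILSvar_ne_zero (n+1) (idx s)) h
      exact hcne r s hrs hi (ILSc_injective (n+1) h2)
    · have hjs : idx s < n + 1 := by have := hidx_le s; omega
      have h1 : CTx (n+1) (idx s) (ILSc (n+1) (c r) * ILSvar (n+1) (idx r))
          = ILSc (n+1) (c r) * ILSvar (n+1) (idx r) :=
        mem_Kfix.mp (mul_mem (mem_Kfix.mpr (ILSc_fixed _ _ _))
          (mem_Kfix.mpr (ILSvar_fixed _ _ _ hi)))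
      have h2 : CTx (n+1) (idx s) (ILSc (n+1) (c s) * ILSvar (n+1) (idx s)) = 0 := by
        rw [CTx_mul_fixed _ _ (ILSc_fixed _ _ _), CTx_var_self _ _ hjs, mul_zero]
      rw [h, h2] at h1
      exact mul_ne_zero (ILSc_ne_zero _ (hc0 r)) (ILSvar_ne_zero _ _) (h.trans h1.symm)
  set G : ILS (n+1) :=
    (∏ r, (1 - ILSvar (n+1) k * (ILSc (n+1) (c r) * ILSvar (n+1) (idx r))⁻¹))⁻¹ with hGdef
  rw [Finset.sum_mul]
  have hassoc : ∀ d ∈ Dset, u d * (ILSvar (n+1) k) ^ d * G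
      = u d * ((ILSvar (n+1) k) ^ d * G) := fun d _ => mul_assoc _ _ _
  rw [Finset.sum_congr rfl hassoc, CTx_sum]
  have hper : ∀ d ∈ Dset, CTx (n+1) k (u d * ((ILSvar (n+1) k) ^ d * G))
      = u d * ∑ r ∈ Finset.univ.filter (fun r : Fin m => k < idx r),
          (ILSc (n+1) (c r) * ILSvar (n+1) (idx r)) ^ d *
            (∏ s ∈ Finset.univ.filter (fun s : Fin m => s ≠ r),
              (1 - (ILSc (n+1) (c r) * ILSvar (n+1) (idx r)) *
                (ILSc (n+1) (c s) * ILSvar (n+1) (idx s))⁻¹))⁻¹ := by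
    intro d hd
    rw [CTx_mul_fixed _ _ (hu d), hGdef,
      CT_per_d (n+1) k hkN m hm idx hidx_ne c hc0 hVne d (hD d hd)]
  rw [Finset.sum_congr rfl hper]
  have hmulsum : ∀ d ∈ Dset, u d * ∑ r ∈ Finset.univ.filter (fun r : Fin m => k < idx r),
      (ILSc (n+1) (c r) * ILSvar (n+1) (idx r)) ^ d *
        (∏ s ∈ Finset.univ.filter (fun s : Fin m => s ≠ r),
          (1 - (ILSc (n+1) (c r) * ILSvar (n+1) (idx r)) *
            (ILSc (n+1) (c s) * ILSvar (n+1) (idx s))⁻¹))⁻¹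
      = ∑ r ∈ Finset.univ.filter (fun r : Fin m => k < idx r),
          u d * ((ILSc (n+1) (c r) * ILSvar (n+1) (idx r)) ^ d *
            (∏ s ∈ Finset.univ.filter (fun s : Fin m => s ≠ r),
              (1 - (ILSc (n+1) (c r) * ILSvar (n+1) (idx r)) *
                (ILSc (n+1) (c s) * ILSvar (n+1) (idx s))⁻¹))⁻¹) := fun d _ =>
    Finset.mul_sum _ _ _
  rw [Finset.sum_congr rfl hmulsum, Finset.sum_comm]
  apply Finset.sum_congr rfl
  intro r _
  rw [Finset.sum_mul]
  apply Finset.sum_congr rfl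
  intro d _
  ring

end
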